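/- Let U be a deformable positively filtered R-algebra with deformations U_n := Σ_{i≥0} π^{in} F_iU (with filtration F_jU_n = Σ_{i=0}^j π^{in} F_iU). Then for all n, m ≥ 0, the m-th deformation of U_n equals U_{n+m}, i.e. (U_n)_m = U_{n+m}. -/

import Mathlib

section FilteredDeformable

variable {R U : Type*} [CommRing R] [Ring U] [Algebra R U]

/-- The image `r • N` of a submodule `N ⊆ U` under multiplication by the scalar `r ∈ R`. -/
noncomputable def smulSub (r : R) (N : Submodule R U) : Submodule R U :=
  Submodule.map (r • (LinearMap.id : U →ₗ[R] U)) N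

/-- A positively filtered `R`-algebra structure on `U`: an exhaustive, increasing,
multiplicative filtration `F₀U ⊆ F₁U ⊆ ⋯` with `1 ∈ F₀U`. -/
structure AlgebraFiltration (F : ℕ → Submodule R U) : Prop where
  mono : Monotone F
  one_mem : (1 : U) ∈ F 0
  mul_le : ∀ i j : ℕ, ∀ x ∈ F i, ∀ y ∈ F j, x * y ∈ F (i + j)
  exhaustive : ∀ u : U, ∃ i, u ∈ F i

/-- `F` shifted down one step, with `F₋₁ = ⊥`; used to express conditions on the associated
graded ring `gr U = ⊕ᵢ Fᵢ U / Fᵢ₋₁ U`. -/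
noncomputable def Fpred (F : ℕ → Submodule R U) : ℕ → Submodule R U :=
  fun i => if i = 0 then ⊥ else F (i - 1)

/-- `U` is deformable: the associated graded ring `gr U` is `π`-torsion-free
(equivalently, flat over the DVR `R`).  Concretely, for every `i` and `x ∈ Fᵢ U`, if
`π • x ∈ Fᵢ₋₁ U` then `x ∈ Fᵢ₋₁ U` (where `F₋₁ U = 0`). -/
def GrTorsionFree (π : R) (F : ℕ → Submodule R U) : Prop :=
  ∀ i : ℕ, ∀ x ∈ F i, π • x ∈ Fpred F i → x ∈ Fpred F i

/-- The associated graded ring `gr U` is commutative: commutators drop filtration degree. -/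
def GrCommutative (F : ℕ → Submodule R U) : Prop :=
  ∀ i j : ℕ, ∀ x ∈ F i, ∀ y ∈ F j, x * y - y * x ∈ Fpred F (i + j)

end FilteredDeformable

section Aux

variable {R U : Type*} [CommRing R] [Ring U] [Algebra R U]

lemma smulSub_le_self (r : R) (N : Submodule R U) : smulSub r N ≤ N := by
  rintro x ⟨y, hy, rfl⟩
  exact N.smul_mem r hy

lemma smulSub_mul (a b : R) (N : Submodule R U) :
    smulSub (a * b) N = smulSub b (smulSub a N) := by
  unfold smulSub
  rw [← Submodule.map_comp]
  congr 1
  ext x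
  simp [mul_comm, mul_smul]
  exact smul_comm _ _ _

lemma smulSub_iSup {ι : Sort*} (r : R) (f : ι → Submodule R U) :
    smulSub r (⨆ i, f i) = ⨆ i, smulSub r (f i) :=
  Submodule.map_iSup _ _

end Aux

/-- Let `U` be a deformable positively filtered `R`-algebra over a complete
DVR `R` with deformations `U_n := Σ_{i≥0} π^{in} Fᵢ U`, where `U_n` carries the filtration
`F_j U_n = Σ_{i=0}^{j} π^{in} Fᵢ U`.  Then for all `n, m ≥ 0` the `m`-th deformation of
`U_n` equals `U_{n+m}`, i.e. `(U_n)_m = Σ_j π^{jm} F_j U_n = Σ_i π^{i(n+m)} Fᵢ U = U_{n+m}`. -/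
theorem deformation_comp
    {R U : Type*} [CommRing R] [IsDomain R] [IsDiscreteValuationRing R]
    (π : R) (hπ0 : π ≠ 0) (hπu : ¬IsUnit π)
    [IsAdicComplete (Ideal.span {π}) R]
    [Ring U] [Algebra R U]
    (F : ℕ → Submodule R U) (hF : AlgebraFiltration F)
    (hdef : GrTorsionFree π F) (n m : ℕ) :
    (⨆ j : ℕ, smulSub (π ^ (j * m))
        (⨆ i : ℕ, ⨆ _ : i ≤ j, smulSub (π ^ (i * n)) (F i))) =
      ⨆ i : ℕ, smulSub (π ^ (i * (n + m))) (F i) := by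
  apply le_antisymm
  · apply iSup_le
    intro j
    rw [smulSub_iSup]
    apply iSup_le
    intro i
    rw [smulSub_iSup]
    apply iSup_le
    intro hij
    refine le_trans ?_ (le_iSup (fun i => smulSub (π ^ (i * (n + m))) (F i)) i)
    have h1 : π ^ (i * n) * π ^ (j * m) = π ^ ((j - i) * m) * π ^ (i * (n + m)) := by
      rw [← pow_add, ← pow_add]
      congr 1
      have : i * n + j * m = i * n + (i * m + (j - i) * m) := by
        rw [← Nat.add_mul, Nat.add_sub_cancel' hij]
      rw [this, Nat.mul_add]
      ring
    rw [← smulSub_mul, h1, smulSub_mul]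
    exact Submodule.map_mono (smulSub_le_self _ _)
  · apply iSup_le
    intro i
    refine le_trans ?_ (le_iSup _ i)
    have : smulSub (π ^ (i * (n + m))) (F i)
        = smulSub (π ^ (i * m)) (smulSub (π ^ (i * n)) (F i)) := by
      rw [← smulSub_mul, ← pow_add, Nat.mul_add]
    rw [this]
    apply Submodule.map_mono
    exact le_iSup_of_le i (le_iSup (fun _ : i ≤ i => smulSub (π ^ (i * n)) (F i)) le_rfl)
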